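/- Let A be a finite subset of a real vector space V with |A| = k ≥ 2, let S(A) = ⋃_{h≥1} hA be the subsemigroup of V generated by A, and let K = conv(A) be the convex hull of A. Then for every integer r ≥ 2 there exists a set X_r ⊆ S(A) such that |X_r| ≤ b(r,k) and rK ⊆ (1/(k-1))∗X_r + K, where b(r,k) is the binomial coefficient C((r+1)(k-1)-1, k-1). In particular, K is an (r, b(r,k))-approximate group in the additive group V. -/

import Mathlib

open Pointwise

/-- The `h`-fold sumset `hA = {a₁ + ⋯ + a_h : aᵢ ∈ A}`. -/
def hsum {V : Type*} [AddCommMonoid V] (h : ℕ) (A : Set V) : Set V :=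
  {z | ∃ f : Fin h → V, (∀ i, f i ∈ A) ∧ z = ∑ i, f i}

/-- The subsemigroup `S(A) = ⋃_{h ≥ 1} hA` generated by `A`. -/
def semigroupGen {V : Type*} [AddCommMonoid V] (A : Set V) : Set V :=
  ⋃ h ∈ Set.Ici (1 : ℕ), hsum h A

/-- The binomial coefficient `b(r,k) = C((r+1)(k-1)-1, k-1)`. -/
def b (r k : ℕ) : ℕ := Nat.choose ((r + 1) * (k - 1) - 1) (k - 1)

section Aux

variable {V : Type*} [AddCommMonoid V]

lemma hsum_add_mem {A : Set V} {p q : ℕ} {u v : V} (hu : u ∈ hsum p A) (hv : v ∈ hsum q A) :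
    u + v ∈ hsum (p + q) A := by
  obtain ⟨f, hf, rfl⟩ := hu
  obtain ⟨g, hg, rfl⟩ := hv
  refine ⟨Fin.append f g, ?_, ?_⟩
  · intro i
    refine Fin.addCases (fun i => ?_) (fun i => ?_) i
    · rw [Fin.append_left]; exact hf i
    · rw [Fin.append_right]; exact hg i
  · rw [Fin.sum_univ_add]
    simp [Fin.append_left, Fin.append_right]

lemma multiset_sum_mem_hsum {A : Set V} (μ : Multiset V) (hμ : ∀ x ∈ μ, x ∈ A) :
    μ.sum ∈ hsum (Multiset.card μ) A := by
  induction μ using Multiset.induction with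
  | empty => exact ⟨Fin.elim0, fun i => i.elim0, by simp; exact (Fin.sum_univ_zero _).symm⟩
  | cons a μ ih =>
    have h1 : a ∈ hsum 1 A := ⟨fun _ => a, fun _ => hμ a (Multiset.mem_cons_self a μ), by simp⟩
    have h2 := hsum_add_mem h1 (ih (fun x hx => hμ x (Multiset.mem_cons_of_mem hx)))
    simpa [Nat.add_comm] using h2

variable {α β : Type*}

lemma exists_le_sum (s : Finset α) (m : α → ℕ) (D : ℕ) (hD : D ≤ ∑ a ∈ s, m a) :
    ∃ d : α → ℕ, (∀ a, d a ≤ m a) ∧ ∑ a ∈ s, d a = D := by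
  classical
  induction s using Finset.cons_induction generalizing D with
  | empty =>
    refine ⟨fun _ => 0, fun _ => Nat.zero_le _, ?_⟩
    simp only [Finset.sum_empty] at hD ⊢
    omega
  | cons a s ha ih =>
    rw [Finset.sum_cons] at hD
    obtain ⟨d, hd1, hd2⟩ := ih (D - min D (m a)) (by omega)
    refine ⟨Function.update d a (min D (m a)), ?_, ?_⟩
    · intro x
      rcases eq_or_ne x a with rfl | hx
      · simp [Function.update_self]
      · simpa [Function.update_of_ne hx] using hd1 x
    · rw [Finset.sum_cons, Function.update_self,
        Finset.sum_congr rfl (fun x hx => Function.update_of_ne (by rintro rfl; exact ha hx) _ d),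
        hd2]
      omega

lemma card_finset_sum (s : Finset α) (μ : α → Multiset β) :
    Multiset.card (∑ a ∈ s, μ a) = ∑ a ∈ s, Multiset.card (μ a) := by
  classical
  induction s using Finset.cons_induction with
  | empty => simp
  | cons a s ha ih => simp [Finset.sum_cons, ih]

lemma multiset_map_finset_sum (f : β → V) (s : Finset α) (μ : α → Multiset β) :
    Multiset.map f (∑ a ∈ s, μ a) = ∑ a ∈ s, Multiset.map f (μ a) := by
  classical
  induction s using Finset.cons_induction with
  | empty => simp
  | cons a s ha ih => rw [Finset.sum_cons, Finset.sum_cons, Multiset.map_add, ih]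

lemma sum_finset_sum (s : Finset α) (μ : α → Multiset V) :
    (∑ a ∈ s, μ a).sum = ∑ a ∈ s, (μ a).sum := by
  classical
  induction s using Finset.cons_induction with
  | empty => simp
  | cons a s ha ih => rw [Finset.sum_cons, Finset.sum_cons, Multiset.sum_add, ih]

end Aux

/-- For a finite subset `A` of a real vector space with `|A| = k ≥ 2` and `K = conv(A)`,
for every `r ≥ 2` there is a set `X_r ⊆ S(A)` with `|X_r| ≤ b(r,k)` and
`rK ⊆ (1/(k-1)) ∗ X_r + K`. In particular, `K` is an `(r, b(r,k))`-approximate group. -/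
theorem polytope_approximate_group {V : Type*} [AddCommGroup V] [Module ℝ V]
    (A : Set V) (hA : A.Finite) (k : ℕ) (hk : A.ncard = k) (hk2 : 2 ≤ k)
    (r : ℕ) (hr : 2 ≤ r) :
    (∃ X : Finset V, (↑X : Set V) ⊆ semigroupGen A ∧ X.card ≤ b r k ∧
      hsum r (convexHull ℝ A) ⊆
        (fun x => ((k : ℝ) - 1)⁻¹ • x) '' (↑X : Set V) + convexHull ℝ A) ∧
    ∃ Y : Finset V, Y.card ≤ b r k ∧
      hsum r (convexHull ℝ A) ⊆ ↑Y + convexHull ℝ A := by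
  classical
  set T : Finset V := hA.toFinset with hT
  have hTA : (↑T : Set V) = A := hA.coe_toFinset
  have hTcard : T.card = k := by rw [← hk, Set.ncard_eq_toFinset_card A hA]
  set n : ℕ := k - 1 with hn
  have hn1 : 1 ≤ n := by omega
  have hnR : (n : ℝ) = (k : ℝ) - 1 := by
    rw [hn, Nat.cast_sub (by omega)]; norm_num
  have hnpos : (0 : ℝ) < (n : ℝ) := by exact_mod_cast hn1
  set N : ℕ := n * (r - 1) with hN
  have hN1 : 1 ≤ N := by
    rw [hN]; exact Nat.mul_pos (by omega) (by omega)
  have e1 : k + N - 1 = n * r := by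
    have h2 : r - 1 + 1 = r := by omega
    calc k + N - 1 = n * (r - 1) + n := by rw [hN]; omega
      _ = n * (r - 1 + 1) := (Nat.mul_succ n (r - 1)).symm
      _ = n * r := by rw [h2]
  have e3 : n * r = N + n := by omega
  -- the candidate set X
  set X : Finset V :=
    Finset.image (fun σ : Sym (↥T) N => (Multiset.map (Subtype.val) (↑σ : Multiset ↥T)).sum)
      Finset.univ with hX
  have hXsub : (↑X : Set V) ⊆ semigroupGen A := by
    intro x hx
    simp only [hX, Finset.coe_image, Finset.coe_univ, Set.image_univ, Set.mem_range] at hx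
    obtain ⟨σ, rfl⟩ := hx
    have hcard : Multiset.card (Multiset.map (Subtype.val) (↑σ : Multiset ↥T)) = N := by
      rw [Multiset.card_map]; exact σ.2
    have hmem : ∀ x ∈ Multiset.map (Subtype.val) (↑σ : Multiset ↥T), x ∈ A := by
      intro x hx
      rw [Multiset.mem_map] at hx
      obtain ⟨y, _, rfl⟩ := hx
      rw [← hTA]; exact y.2
    have h5 := multiset_sum_mem_hsum _ hmem
    rw [hcard] at h5
    exact Set.mem_biUnion (show N ∈ Set.Ici 1 from hN1) h5
  have hXcard : X.card ≤ b r k := by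
    have h1 : X.card ≤ Fintype.card (Sym (↥T) N) := by
      rw [hX]
      simpa using Finset.card_image_le (s := (Finset.univ : Finset (Sym (↥T) N)))
        (f := fun σ => (Multiset.map (Subtype.val) (↑σ : Multiset ↥T)).sum)
    rw [Sym.card_sym_eq_choose] at h1
    have hcardT : Fintype.card ↥T = k := by simp [hTcard]
    rw [hcardT, e1] at h1
    have hsymm : (n * r).choose n = (n * r).choose N := by
      have hle : N ≤ n * r := by omega
      have := Nat.choose_symm hle
      rwa [show n * r - N = n by omega] at this
    rw [← hsymm] at h1
    refine h1.trans ?_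
    unfold b
    rw [← hn]
    refine Nat.choose_le_choose n ?_
    have : (r + 1) * n = n * r + n := by ring
    omega
  -- Main inclusion
  have hmain : hsum r (convexHull ℝ A) ⊆
      (fun x => ((k : ℝ) - 1)⁻¹ • x) '' (↑X : Set V) + convexHull ℝ A := by
    intro z hz
    obtain ⟨f, hf, rfl⟩ := hz
    have hfT : ∀ j, f j ∈ convexHull ℝ (↑T : Set V) := by rw [hTA]; exact hf
    have hrep : ∀ j : Fin r, ∃ w : V → ℝ, (∀ y ∈ T, 0 ≤ w y) ∧ (∑ y ∈ T, w y = 1) ∧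
        f j = ∑ y ∈ T, w y • y := by
      intro j
      obtain ⟨w, hw0, hw1, hwz⟩ := Finset.mem_convexHull.1 (hfT j)
      exact ⟨w, hw0, hw1, by rw [← hwz, Finset.centerMass_eq_of_sum_1 T id hw1]; simp⟩
    choose w hw0 hw1 hwz using hrep
    set c : V → ℝ := fun y => ∑ j, w j y with hc
    have hc0 : ∀ y ∈ T, 0 ≤ c y := fun y hy => Finset.sum_nonneg fun j _ => hw0 j y hy
    have hcr : ∑ y ∈ T, c y = r := by
      rw [hc]
      rw [Finset.sum_comm]
      simp [hw1]
    have hzc : ∑ j, f j = ∑ y ∈ T, c y • y := by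
      calc ∑ j, f j = ∑ j, ∑ y ∈ T, w j y • y := by exact Finset.sum_congr rfl fun j _ => hwz j
        _ = ∑ y ∈ T, ∑ j, w j y • y := Finset.sum_comm
        _ = ∑ y ∈ T, c y • y := by
            refine Finset.sum_congr rfl fun y _ => ?_
            rw [hc, Finset.sum_smul]
    set m : V → ℕ := fun y => ⌊(n : ℝ) * c y⌋₊ with hm
    have hmle : ∀ y ∈ T, (m y : ℝ) ≤ (n : ℝ) * c y := fun y hy =>
      Nat.floor_le (mul_nonneg hnpos.le (hc0 y hy))
    set M : ℕ := ∑ y ∈ T, m y with hM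
    have hMu : (M : ℝ) ≤ (n : ℝ) * r := by
      rw [hM]
      push_cast
      calc ∑ y ∈ T, (m y : ℝ) ≤ ∑ y ∈ T, (n : ℝ) * c y :=
            Finset.sum_le_sum fun y hy => hmle y hy
        _ = (n : ℝ) * ∑ y ∈ T, c y := by rw [Finset.mul_sum]
        _ = (n : ℝ) * r := by rw [hcr]
    have hMl : (n : ℝ) * r < (M : ℝ) + k := by
      have h6 : ∀ y ∈ T, (n : ℝ) * c y < (m y : ℝ) + 1 := fun y _ => Nat.lt_floor_add_one _
      calc (n : ℝ) * r = ∑ y ∈ T, (n : ℝ) * c y := by rw [← Finset.mul_sum, hcr]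
        _ < ∑ y ∈ T, ((m y : ℝ) + 1) := by
            apply Finset.sum_lt_sum_of_nonempty
            · rw [← Finset.card_pos, hTcard]; omega
            · exact h6
        _ = (M : ℝ) + k := by
            rw [Finset.sum_add_distrib, Finset.sum_const, hTcard, hM, nsmul_eq_mul, mul_one]
            push_cast
            ring
    have hMu' : M ≤ n * r := by exact_mod_cast hMu
    have hMl' : n * r < M + k := by exact_mod_cast hMl
    have hNM : N ≤ M := by omega
    obtain ⟨d, hd1, hd2⟩ := exists_le_sum T m (M - N) (by omega)
    set m' : V → ℕ := fun y => m y - d y with hm'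
    have hm'sum : ∑ y ∈ T, m' y = N := by
      have h7 : ∑ y ∈ T, m' y + ∑ y ∈ T, d y = ∑ y ∈ T, m y := by
        rw [← Finset.sum_add_distrib]
        exact Finset.sum_congr rfl fun y _ => Nat.sub_add_cancel (hd1 y)
      omega
    set x : V := ∑ y ∈ T, m' y • y with hxdef
    -- x ∈ X
    have hxX : x ∈ X := by
      set μ : Multiset ↥T := ∑ y ∈ T.attach, Multiset.replicate (m' ↑y) y with hμ
      have hμcard : Multiset.card μ = N := by
        rw [hμ, card_finset_sum]
        simp only [Multiset.card_replicate]
        rw [Finset.sum_attach T (fun y => m' y)]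
        exact hm'sum
      rw [hX, Finset.mem_image]
      refine ⟨⟨μ, hμcard⟩, Finset.mem_univ _, ?_⟩
      show (Multiset.map Subtype.val μ).sum = x
      rw [hμ, multiset_map_finset_sum, hxdef]
      rw [sum_finset_sum]
      rw [← Finset.sum_attach T (fun y => m' y • y)]
      refine Finset.sum_congr rfl fun y _ => ?_
      rw [Multiset.map_replicate, Multiset.sum_replicate]
    -- the convex part
    set θ : V → ℝ := fun y => c y - (m' y : ℝ) / n with hθ
    have hθ0 : ∀ y ∈ T, 0 ≤ θ y := by
      intro y hy
      rw [hθ]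
      have h8 : (m' y : ℝ) ≤ (m y : ℝ) := by
        exact_mod_cast Nat.sub_le (m y) (d y)
      have h9 : (m' y : ℝ) / n ≤ c y := by
        rw [div_le_iff₀ hnpos]
        calc (m' y : ℝ) ≤ (m y : ℝ) := h8
          _ ≤ (n : ℝ) * c y := hmle y hy
          _ = c y * n := by ring
      linarith
    have hNcast : (N : ℝ) = (n : ℝ) * ((r : ℝ) - 1) := by
      rw [hN]; push_cast [Nat.cast_sub (by omega : 1 ≤ r)]; ring
    have hθ1 : ∑ y ∈ T, θ y = 1 := by
      simp only [hθ]
      rw [Finset.sum_sub_distrib, hcr, ← Finset.sum_div]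
      have h10 : ∑ y ∈ T, (m' y : ℝ) = (N : ℝ) := by
        rw [← hm'sum]; push_cast; rfl
      rw [h10, hNcast]
      field_simp
      ring
    set y0 : V := ∑ y ∈ T, θ y • y with hy0def
    have hy0K : y0 ∈ convexHull ℝ A := by
      rw [← hTA]
      refine Finset.mem_convexHull.2 ⟨θ, hθ0, hθ1, ?_⟩
      rw [Finset.centerMass_eq_of_sum_1 T id hθ1]
      simp [hy0def]
    -- z = (1/n) • x + y0
    have hsplit : ∑ j, f j = ((k : ℝ) - 1)⁻¹ • x + y0 := by
      rw [hzc, ← hnR, hxdef, hy0def, Finset.smul_sum, ← Finset.sum_add_distrib]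
      refine Finset.sum_congr rfl fun y _ => ?_
      rw [← Nat.cast_smul_eq_nsmul ℝ (m' y) y, smul_smul, hθ, sub_smul, div_eq_inv_mul]
      abel
    refine ⟨((k : ℝ) - 1)⁻¹ • x, ⟨x, hxX, rfl⟩, y0, hy0K, hsplit.symm⟩
  refine ⟨⟨X, hXsub, hXcard, hmain⟩, ?_⟩
  refine ⟨X.image (fun x => ((k : ℝ) - 1)⁻¹ • x), ?_, ?_⟩
  · exact (Finset.card_image_le).trans hXcard
  · rw [Finset.coe_image]
    exact hmain
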